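/- Let A ∈ ℚ^{m×n}, b ∈ ℚ^m and j ∈ {1,…,n}. Then for every x ∈ ℝ^n: (∃ r ∈ ℝ such that x[j := r] satisfies A x ≤ b) if and only if x satisfies some system in FMplexElim⁻_j(A,b), if and only if x satisfies some system in FMplexElim⁺_j(A,b). -/

import Mathlib

/-- An assignment `x ∈ ℝ^n` satisfies the system `A x ≤ b` (componentwise). -/
def SatSys {ι : Type*} [Fintype ι] {n : ℕ} (A : Matrix ι (Fin n) ℚ) (b : ι → ℚ)
    (x : Fin n → ℝ) : Prop :=
  ∀ i, ∑ k, (A i k : ℝ) * x k ≤ (b i : ℝ)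

/-- The `k`-th standard unit row vector. -/
def unitRow {ι : Type*} [DecidableEq ι] (k : ι) : ι → ℚ :=
  fun l => if l = k then 1 else 0

/-- The projection matrix `F ∈ ℚ^{(m−1)×m}` of the restricted projection of `x_j`
with respect to the designated row `i`. -/
def projMatrix {m n : ℕ} (A : Matrix (Fin m) (Fin n) ℚ) (j : Fin n) (i : Fin m) :
    Matrix {i' : Fin m // i' ≠ i} (Fin m) ℚ :=
  Matrix.of fun i' =>
    if A i'.1 j < 0 then (A i j)⁻¹ • unitRow i - (A i'.1 j)⁻¹ • unitRow i'.1
    else if 0 < A i'.1 j then (A i'.1 j)⁻¹ • unitRow i'.1 - (A i j)⁻¹ • unitRow i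
    else unitRow i'.1

/-- `x` satisfies the restricted projection `fmpproj(A,b,j,i)`. -/
def SatProj {m n : ℕ} (A : Matrix (Fin m) (Fin n) ℚ) (b : Fin m → ℚ) (j : Fin n)
    (i : Fin m) (x : Fin n → ℝ) : Prop :=
  SatSys (projMatrix A j i * A) ((projMatrix A j i).mulVec b) x

/-- `x` satisfies the degenerate restricted projection `fmpproj(A,b,j,⊥)`, i.e. the
subsystem of `A x ≤ b` consisting of the rows in `N_j(A)`. -/
def SatProjBot {m n : ℕ} (A : Matrix (Fin m) (Fin n) ℚ) (b : Fin m → ℚ) (j : Fin n)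
    (x : Fin n → ℝ) : Prop :=
  ∀ i, A i j = 0 → ∑ k, (A i k : ℝ) * x k ≤ (b i : ℝ)

/-- `x` satisfies some system in `FMplexElim⁻_j(A,b)`. -/
def SatElimLower {m n : ℕ} (A : Matrix (Fin m) (Fin n) ℚ) (b : Fin m → ℚ) (j : Fin n)
    (x : Fin n → ℝ) : Prop :=
  if (∃ ℓ, A ℓ j < 0) ∧ (∃ u, 0 < A u j) then
    ∃ i, A i j < 0 ∧ SatProj A b j i x
  else SatProjBot A b j x

/-- `x` satisfies some system in `FMplexElim⁺_j(A,b)`. -/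
def SatElimUpper {m n : ℕ} (A : Matrix (Fin m) (Fin n) ℚ) (b : Fin m → ℚ) (j : Fin n)
    (x : Fin n → ℝ) : Prop :=
  if (∃ ℓ, A ℓ j < 0) ∧ (∃ u, 0 < A u j) then
    ∃ i, 0 < A i j ∧ SatProj A b j i x
  else SatProjBot A b j x

section Aux

variable {m n : ℕ}

/-- The real value of row `i` of `A` at `x`. -/
noncomputable def Dv (A : Matrix (Fin m) (Fin n) ℚ) (x : Fin n → ℝ) : Fin m → ℝ :=
  fun i => ∑ k, (A i k : ℝ) * x k

/-- The bound on `x j` induced by row `i` (when `A i j ≠ 0`). -/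
noncomputable def rho (A : Matrix (Fin m) (Fin n) ℚ) (b : Fin m → ℚ) (j : Fin n)
    (x : Fin n → ℝ) : Fin m → ℝ :=
  fun i => x j - (A i j : ℝ)⁻¹ * (Dv A x i - (b i : ℝ))

variable (A : Matrix (Fin m) (Fin n) ℚ) (b : Fin m → ℚ) (j : Fin n) (x : Fin n → ℝ)

lemma row_update (i : Fin m) (r : ℝ) :
    ∑ k, (A i k : ℝ) * Function.update x j r k = Dv A x i + (A i j : ℝ) * (r - x j) := by
  have h : ∀ k ∈ Finset.univ, (A i k : ℝ) * Function.update x j r k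
      = (A i k : ℝ) * x k + (if k = j then (A i j : ℝ) * (r - x j) else 0) := by
    intro k _
    rcases eq_or_ne k j with rfl | hk
    · simp [Function.update_apply]; ring
    · simp [Function.update_apply, hk]
  rw [Finset.sum_congr rfl h, Finset.sum_add_distrib,
    Finset.sum_ite_eq' Finset.univ j (fun _ => (A i j : ℝ) * (r - x j))]
  simp [Dv]

lemma sat_row_neg {i : Fin m} (h : A i j < 0) (r : ℝ) :
    (∑ k, (A i k : ℝ) * Function.update x j r k ≤ (b i : ℝ)) ↔ rho A b j x i ≤ r := by
  rw [row_update]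
  have hA : (A i j : ℝ) < 0 := by exact_mod_cast h
  have hne : (A i j : ℝ) ≠ 0 := ne_of_lt hA
  have key : (A i j : ℝ) * (rho A b j x i - x j) = (b i : ℝ) - Dv A x i := by
    simp only [rho, sub_sub_cancel_left, mul_neg, ← mul_assoc, mul_inv_cancel₀ hne,
      one_mul, neg_sub]
  constructor
  · intro hle
    have h2 : (A i j : ℝ) * (r - x j) ≤ (A i j : ℝ) * (rho A b j x i - x j) := by linarith
    have := (mul_le_mul_left_of_neg hA).mp h2
    linarith
  · intro hle
    have h2 : rho A b j x i - x j ≤ r - x j := by linarith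
    have := (mul_le_mul_left_of_neg hA).mpr h2
    linarith

lemma sat_row_pos {i : Fin m} (h : 0 < A i j) (r : ℝ) :
    (∑ k, (A i k : ℝ) * Function.update x j r k ≤ (b i : ℝ)) ↔ r ≤ rho A b j x i := by
  rw [row_update]
  have hA : (0 : ℝ) < (A i j : ℝ) := by exact_mod_cast h
  have hne : (A i j : ℝ) ≠ 0 := ne_of_gt hA
  have key : (A i j : ℝ) * (rho A b j x i - x j) = (b i : ℝ) - Dv A x i := by
    simp only [rho, sub_sub_cancel_left, mul_neg, ← mul_assoc, mul_inv_cancel₀ hne,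
      one_mul, neg_sub]
  constructor
  · intro hle
    have h2 : (A i j : ℝ) * (r - x j) ≤ (A i j : ℝ) * (rho A b j x i - x j) := by linarith
    have := (mul_le_mul_iff_right₀ hA).mp h2
    linarith
  · intro hle
    have h2 : r - x j ≤ rho A b j x i - x j := by linarith
    have := (mul_le_mul_iff_right₀ hA).mpr h2
    linarith

lemma sat_row_zero {i : Fin m} (h : A i j = 0) (r : ℝ) :
    (∑ k, (A i k : ℝ) * Function.update x j r k ≤ (b i : ℝ)) ↔ Dv A x i ≤ (b i : ℝ) := by
  rw [row_update]
  have hA : (A i j : ℝ) = 0 := by exact_mod_cast h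
  rw [hA]
  simp

lemma unit_dot (q : Fin m) (v : Fin m → ℝ) :
    ∑ l, ((unitRow q l : ℚ) : ℝ) * v l = v q := by
  simp [unitRow, apply_ite (fun t : ℚ => (t : ℝ)), ite_mul, Finset.sum_ite_eq']

lemma smul_sub_dot (a c : ℚ) (p q : Fin m) (v : Fin m → ℝ) :
    ∑ l, (((a • unitRow p - c • unitRow q : Fin m → ℚ) l : ℚ) : ℝ) * v l
      = (a : ℝ) * v p - (c : ℝ) * v q := by
  have h : ∀ l ∈ Finset.univ, (((a • unitRow p - c • unitRow q : Fin m → ℚ) l : ℚ) : ℝ) * v l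
      = (a : ℝ) * (((unitRow p l : ℚ) : ℝ) * v l) - (c : ℝ) * (((unitRow q l : ℚ) : ℝ) * v l) := by
    intro l _
    simp only [Pi.sub_apply, Pi.smul_apply, smul_eq_mul]
    push_cast
    ring
  rw [Finset.sum_congr rfl h, Finset.sum_sub_distrib, ← Finset.mul_sum, ← Finset.mul_sum,
    unit_dot, unit_dot]

lemma satProj_iff (i : Fin m) :
    SatProj A b j i x ↔ ∀ i', i' ≠ i →
      ((A i' j < 0 → rho A b j x i' ≤ rho A b j x i) ∧
       (0 < A i' j → rho A b j x i ≤ rho A b j x i') ∧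
       (A i' j = 0 → Dv A x i' ≤ (b i' : ℝ))) := by
  unfold SatProj SatSys
  rw [Subtype.forall]
  refine forall₂_congr fun i' hi' => ?_
  have hL : ∑ k, (((projMatrix A j i * A) ⟨i', hi'⟩ k : ℚ) : ℝ) * x k
      = ∑ l, ((projMatrix A j i ⟨i', hi'⟩ l : ℚ) : ℝ) * Dv A x l := by
    simp only [Matrix.mul_apply, Rat.cast_sum, Rat.cast_mul, Finset.sum_mul, mul_assoc]
    rw [Finset.sum_comm]
    simp only [← Finset.mul_sum, Dv]
  have hR : (((projMatrix A j i).mulVec b ⟨i', hi'⟩ : ℚ) : ℝ)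
      = ∑ l, ((projMatrix A j i ⟨i', hi'⟩ l : ℚ) : ℝ) * (b l : ℝ) := by
    simp only [Matrix.mulVec, dotProduct]
    push_cast
    rfl
  rw [hL, hR]
  rcases lt_trichotomy (A i' j) 0 with h | h | h
  · have hrow : projMatrix A j i ⟨i', hi'⟩ = (A i j)⁻¹ • unitRow i - (A i' j)⁻¹ • unitRow i' := by
      show (if A i' j < 0 then (A i j)⁻¹ • unitRow i - (A i' j)⁻¹ • unitRow i'
        else if 0 < A i' j then (A i' j)⁻¹ • unitRow i' - (A i j)⁻¹ • unitRow i
        else unitRow i') = _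
      rw [if_pos h]
    rw [hrow, smul_sub_dot, smul_sub_dot]
    push_cast
    constructor
    · intro hh
      refine ⟨fun _ => ?_, fun h' => absurd h' (lt_asymm h), fun h' => absurd h' h.ne⟩
      simp only [rho]
      nlinarith [hh]
    · intro hh
      have := hh.1 h
      simp only [rho] at this
      nlinarith [this]
  · have hrow : projMatrix A j i ⟨i', hi'⟩ = unitRow i' := by
      show (if A i' j < 0 then (A i j)⁻¹ • unitRow i - (A i' j)⁻¹ • unitRow i'
        else if 0 < A i' j then (A i' j)⁻¹ • unitRow i' - (A i j)⁻¹ • unitRow i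
        else unitRow i') = _
      rw [if_neg (by rw [h]; exact lt_irrefl 0), if_neg (by rw [h]; exact lt_irrefl 0)]
    rw [hrow, unit_dot, unit_dot]
    constructor
    · intro hh
      exact ⟨fun h' => absurd h' (by rw [h]; exact lt_irrefl 0),
        fun h' => absurd h' (by rw [h]; exact lt_irrefl 0), fun _ => hh⟩
    · intro hh
      exact hh.2.2 h
  · have hrow : projMatrix A j i ⟨i', hi'⟩ = (A i' j)⁻¹ • unitRow i' - (A i j)⁻¹ • unitRow i := by
      show (if A i' j < 0 then (A i j)⁻¹ • unitRow i - (A i' j)⁻¹ • unitRow i'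
        else if 0 < A i' j then (A i' j)⁻¹ • unitRow i' - (A i j)⁻¹ • unitRow i
        else unitRow i') = _
      rw [if_neg (lt_asymm h), if_pos h]
    rw [hrow, smul_sub_dot, smul_sub_dot]
    push_cast
    constructor
    · intro hh
      refine ⟨fun h' => absurd h' (lt_asymm h), fun _ => ?_, fun h' => absurd h' h.ne'⟩
      simp only [rho]
      nlinarith [hh]
    · intro hh
      have := hh.2.1 h
      simp only [rho] at this
      nlinarith [this]

end Aux

/-- Correctness of FMplex variable elimination: `x` extends to a solution of `A x ≤ b`
iff `x` satisfies some system in `FMplexElim⁻_j(A,b)`, iff `x` satisfies some system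
in `FMplexElim⁺_j(A,b)`. -/
theorem fmplex_elim_correct {m n : ℕ} (A : Matrix (Fin m) (Fin n) ℚ) (b : Fin m → ℚ)
    (j : Fin n) (x : Fin n → ℝ) :
    ((∃ r : ℝ, SatSys A b (Function.update x j r)) ↔ SatElimLower A b j x) ∧
    ((∃ r : ℝ, SatSys A b (Function.update x j r)) ↔ SatElimUpper A b j x) := by
  by_cases hc : (∃ ℓ, A ℓ j < 0) ∧ (∃ u, 0 < A u j)
  · obtain ⟨⟨ℓ0, hℓ0⟩, ⟨u0, hu0⟩⟩ := hc
    constructor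
    · rw [SatElimLower, if_pos ⟨⟨ℓ0, hℓ0⟩, ⟨u0, hu0⟩⟩]
      constructor
      · rintro ⟨r, hr⟩
        obtain ⟨i, hiS, hmax⟩ := Finset.exists_max_image
          (Finset.univ.filter fun ℓ => A ℓ j < 0) (rho A b j x)
          ⟨ℓ0, by simp [hℓ0]⟩
        simp only [Finset.mem_filter, Finset.mem_univ, true_and] at hiS hmax
        refine ⟨i, hiS, (satProj_iff A b j x i).mpr ?_⟩
        intro i' hi'
        refine ⟨fun h' => hmax i' h', fun h' => ?_, fun h' => ?_⟩
        · have h1 := (sat_row_neg A b j x hiS r).mp (hr i)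
          have h2 := (sat_row_pos A b j x h' r).mp (hr i')
          linarith
        · exact (sat_row_zero A b j x h' r).mp (hr i')
      · rintro ⟨i, hi, hproj⟩
        refine ⟨rho A b j x i, fun i' => ?_⟩
        have hp := (satProj_iff A b j x i).mp hproj
        rcases lt_trichotomy (A i' j) 0 with h | h | h
        · rw [sat_row_neg A b j x h]
          rcases eq_or_ne i' i with rfl | hne
          · exact le_refl _
          · exact (hp i' hne).1 h
        · rw [sat_row_zero A b j x h]
          exact (hp i' (by rintro rfl; rw [h] at hi; exact lt_irrefl 0 hi)).2.2 h
        · rw [sat_row_pos A b j x h]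
          exact (hp i' (by rintro rfl; exact lt_asymm hi h)).2.1 h
    · rw [SatElimUpper, if_pos ⟨⟨ℓ0, hℓ0⟩, ⟨u0, hu0⟩⟩]
      constructor
      · rintro ⟨r, hr⟩
        obtain ⟨i, hiS, hmin⟩ := Finset.exists_min_image
          (Finset.univ.filter fun u => 0 < A u j) (rho A b j x)
          ⟨u0, by simp [hu0]⟩
        simp only [Finset.mem_filter, Finset.mem_univ, true_and] at hiS hmin
        refine ⟨i, hiS, (satProj_iff A b j x i).mpr ?_⟩
        intro i' hi'
        refine ⟨fun h' => ?_, fun h' => hmin i' h', fun h' => ?_⟩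
        · have h1 := (sat_row_neg A b j x h' r).mp (hr i')
          have h2 := (sat_row_pos A b j x hiS r).mp (hr i)
          linarith
        · exact (sat_row_zero A b j x h' r).mp (hr i')
      · rintro ⟨i, hi, hproj⟩
        refine ⟨rho A b j x i, fun i' => ?_⟩
        have hp := (satProj_iff A b j x i).mp hproj
        rcases lt_trichotomy (A i' j) 0 with h | h | h
        · rw [sat_row_neg A b j x h]
          exact (hp i' (by rintro rfl; exact lt_asymm hi h)).1 h
        · rw [sat_row_zero A b j x h]
          exact (hp i' (by rintro rfl; rw [h] at hi; exact lt_irrefl 0 hi)).2.2 h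
        · rw [sat_row_pos A b j x h]
          rcases eq_or_ne i' i with rfl | hne
          · exact le_refl _
          · exact (hp i' hne).2.1 h
  · have hbot : (∃ r : ℝ, SatSys A b (Function.update x j r)) ↔ SatProjBot A b j x := by
      constructor
      · rintro ⟨r, hr⟩ i hij
        have := (sat_row_zero A b j x hij r).mp (hr i)
        simpa [Dv] using this
      · intro hb
        rw [not_and_or] at hc
        push_neg at hc
        rcases hc with hc | hc
        · obtain ⟨M, hM⟩ := Finset.exists_le (Finset.univ.image fun i => -rho A b j x i)
          refine ⟨-M, fun i => ?_⟩
          rcases lt_trichotomy (A i j) 0 with h | h | h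
          · exact absurd h (not_lt_of_ge (hc i))
          · rw [sat_row_zero A b j x h]
            simpa [Dv] using hb i h
          · rw [sat_row_pos A b j x h]
            have := hM (-rho A b j x i) (Finset.mem_image_of_mem _ (Finset.mem_univ i))
            linarith
        · obtain ⟨M, hM⟩ := Finset.exists_le (Finset.univ.image (rho A b j x))
          refine ⟨M, fun i => ?_⟩
          rcases lt_trichotomy (A i j) 0 with h | h | h
          · rw [sat_row_neg A b j x h]
            exact hM _ (Finset.mem_image_of_mem _ (Finset.mem_univ i))
          · rw [sat_row_zero A b j x h]
            simpa [Dv] using hb i h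
          · exact absurd h (not_lt_of_ge (hc i))
    rw [SatElimLower, SatElimUpper, if_neg hc, if_neg hc]
    exact ⟨hbot, hbot⟩
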